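/- Let n, m ≥ 1 and let π ∈ J_{2n,2m} be a fixed-point-free involution; set I = I_{2n+2m}. Then the permutation I∘π has exactly two cycles (orbits), each of cardinality n+m; consequently n+m is even. -/

import Mathlib

noncomputable def cycleCount {N : ℕ} (π : Equiv.Perm (Fin N)) : ℕ :=
  Set.ncard {O : Set (Fin N) | ∃ x, O = {y | π.SameCycle x y}}

noncomputable def cyclesIn {N : ℕ} (π : Equiv.Perm (Fin N)) (C : Set (Fin N)) : ℕ :=
  Set.ncard {O : Set (Fin N) | (∃ x, O = {y | π.SameCycle x y}) ∧ O ⊆ C}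

/-- The annular permutation `γ_{p,q}` of `{1,…,p+q}` (0-indexed as `Fin (p+q)`),
with the two cycles `(1,…,p)` and `(p+1,…,p+q)`. -/
def annularGamma (p q : ℕ) : Equiv.Perm (Fin (p + q)) :=
  finSumFinEquiv.permCongr ((finRotate p).sumCongr (finRotate q))

/-- The interval involution `I_N = (1 2)(3 4)⋯(N-1 N)` of `{1,…,N}`
(0-indexed: swaps `2i ↔ 2i+1`), for `N` even. -/
def intervalInvolution (N : ℕ) : Equiv.Perm (Fin N) :=
  Function.Involutive.toPerm
    (fun x => ⟨if x.val % 2 = 0 then min (x.val + 1) (N - 1) else x.val - 1, by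
      rcases x with ⟨v, hv⟩
      dsimp only
      split <;> omega⟩)
    (by
      intro x
      rcases x with ⟨v, hv⟩
      apply Fin.ext
      dsimp only
      split_ifs <;> omega)

/-- The subgroup generated by `π` and `ρ` acts transitively on `Fin N`. -/
def JointTrans {N : ℕ} (π ρ : Equiv.Perm (Fin N)) : Prop :=
  ∀ x y : Fin N, ∃ g ∈ Subgroup.closure ({π, ρ} : Set (Equiv.Perm (Fin N))), g x = y

/-- `α` separates even numbers: no cycle of `α` contains two distinct even numbers
(an element `x : Fin N` represents the number `x.val + 1`). -/
def SeparatesEven {N : ℕ} (α : Equiv.Perm (Fin N)) : Prop :=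
  ∀ x y : Fin N, α.SameCycle x y → (x.val + 1) % 2 = 0 → (y.val + 1) % 2 = 0 → x = y

/-- `π ∈ S_NC(p,q)`: annular non-crossing permutations. -/
def AnnularNC (p q : ℕ) (π : Equiv.Perm (Fin (p + q))) : Prop :=
  JointTrans π (annularGamma p q) ∧
    cycleCount π + cycleCount (π⁻¹ * annularGamma p q) = p + q

/-- `A` witnesses bipartiteness of the graph `G_π`: `π(A) = A` and for each `i`,
exactly one of the (1-indexed) numbers `2i-1`, `2i` belongs to `A`. -/
def BipartSet {N : ℕ} (π : Equiv.Perm (Fin N)) (A : Set (Fin N)) : Prop :=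
  (⇑π) '' A = A ∧ ∀ i : ℕ, ∀ h : 2 * i + 1 < N,
    Xor' ((⟨2 * i, Nat.lt_of_succ_lt h⟩ : Fin N) ∈ A) ((⟨2 * i + 1, h⟩ : Fin N) ∈ A)

/-- The graph `G_π` is bipartite. -/
def GraphBipartite {N : ℕ} (π : Equiv.Perm (Fin N)) : Prop :=
  ∃ A : Set (Fin N), BipartSet π A

/-- `π ∈ J_{2n,2m}`: annular non-crossing, bipartite graph, and `π⁻¹γ` separates even. -/
def memJ (n m : ℕ) (π : Equiv.Perm (Fin (2 * n + 2 * m))) : Prop :=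
  AnnularNC (2 * n) (2 * m) π ∧ GraphBipartite π ∧
    SeparatesEven (π⁻¹ * annularGamma (2 * n) (2 * m))

/-- A finite set invariant under a fixed-point-free involution has even cardinality. -/
lemma aux_even_ncard {α : Type*} (g : α → α) (hinv : ∀ x, g (g x) = x)
    (hne : ∀ x, g x ≠ x) :
    ∀ (k : ℕ) (s : Set α), s.Finite → (∀ x ∈ s, g x ∈ s) → s.ncard = k → Even k := by
  intro k
  induction k using Nat.strong_induction_on with
  | _ k ih =>
    intro s hfin hmap hcard
    rcases Nat.eq_zero_or_pos k with h0 | hpos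
    · simp [h0]
    · have hne' : s.Nonempty := by
        rw [← Set.ncard_pos hfin]
        omega
      obtain ⟨x, hx⟩ := hne'
      have hgx : g x ∈ s := hmap x hx
      have hxgx : x ≠ g x := fun h => hne x h.symm
      set t := s \ {x, g x} with ht
      have htsub : ({x, g x} : Set α) ⊆ s := by
        intro z hz
        rcases hz with rfl | rfl
        · exact hx
        · exact hgx
      have htfin : t.Finite := hfin.diff
      have htmap : ∀ y ∈ t, g y ∈ t := by
        rintro y ⟨hy1, hy2⟩
        simp only [Set.mem_insert_iff, Set.mem_singleton_iff, not_or] at hy2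
        refine ⟨hmap y hy1, ?_⟩
        simp only [Set.mem_insert_iff, Set.mem_singleton_iff, not_or]
        constructor
        · intro hc
          exact hy2.2 (by rw [← hc, hinv y])
        · intro hc
          refine hy2.1 ?_
          have := congrArg g hc
          rwa [hinv, hinv] at this
      have hcard2 : ({x, g x} : Set α).ncard = 2 := Set.ncard_pair hxgx
      have hsplit : t.ncard + ({x, g x} : Set α).ncard = s.ncard :=
        Set.ncard_diff_add_ncard_of_subset htsub hfin
      have hlt : t.ncard < k := by omega
      have hev := ih t.ncard hlt t htfin htmap rfl
      obtain ⟨r, hr⟩ := hev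
      exact ⟨r + 1, by omega⟩

lemma gamma_apply_even (p q : ℕ) (hp : p % 2 = 0) (hq : q % 2 = 0) (x : Fin (p+q))
    (hx : x.val % 2 = 0) : annularGamma p q x = ⟨x.val + 1, by omega⟩ := by
  have hlt := x.isLt
  unfold annularGamma
  rw [Equiv.permCongr_apply]
  by_cases h : x.val < p
  · obtain ⟨p', rfl⟩ : ∃ p', p = p' + 1 := ⟨p - 1, by omega⟩
    have hsymm : finSumFinEquiv.symm x = Sum.inl (⟨x.val, h⟩ : Fin (p'+1)) := by
      rw [Equiv.symm_apply_eq, finSumFinEquiv_apply_left]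
      exact Fin.ext rfl
    rw [hsymm]
    simp only [Equiv.sumCongr_apply, Sum.map_inl, finRotate_succ_apply,
      finSumFinEquiv_apply_left]
    apply Fin.ext
    simp only [Fin.coe_castAdd]
    rw [Fin.val_add_one_of_lt]
    · rw [Fin.lt_def]
      simp only [Fin.val_last]
      omega
  · obtain ⟨q', rfl⟩ : ∃ q', q = q' + 1 := ⟨q - 1, by omega⟩
    have hsymm : finSumFinEquiv.symm x = Sum.inr (⟨x.val - p, by omega⟩ : Fin (q'+1)) := by
      rw [Equiv.symm_apply_eq, finSumFinEquiv_apply_right]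
      exact Fin.ext (by simp [Fin.natAdd]; omega)
    rw [hsymm]
    simp only [Equiv.sumCongr_apply, Sum.map_inr, finRotate_succ_apply,
      finSumFinEquiv_apply_right]
    apply Fin.ext
    simp only [Fin.coe_natAdd]
    rw [Fin.val_add_one_of_lt]
    · simp only []
      omega
    · rw [Fin.lt_def]
      simp only [Fin.val_last]
      omega

theorem stmt_18 (n m : ℕ) (hn : 1 ≤ n) (hm : 1 ≤ m)
    (π : Equiv.Perm (Fin (2 * n + 2 * m))) (hπ : memJ n m π)
    (hpair : ∀ x, π (π x) = x ∧ π x ≠ x) :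
    cycleCount (intervalInvolution (2 * n + 2 * m) * π) = 2 ∧
    (∀ x : Fin (2 * n + 2 * m),
      Set.ncard {y | (intervalInvolution (2 * n + 2 * m) * π).SameCycle x y} = n + m) ∧
    Even (n + m) := by
  classical
  obtain ⟨⟨htrans, _hcc⟩, ⟨A, hA_img, hA_xor⟩, hsep⟩ := hπ
  set I : Equiv.Perm (Fin (2*n+2*m)) := intervalInvolution (2 * n + 2 * m) with hIdef
  set γ : Equiv.Perm (Fin (2*n+2*m)) := annularGamma (2 * n) (2 * m) with hγdef
  set τ : Equiv.Perm (Fin (2*n+2*m)) := I * π with hτdef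
  set σ : Equiv.Perm (Fin (2*n+2*m)) := π⁻¹ * γ with hσdef
  -- basic facts about I
  have hIval : ∀ x : Fin (2*n+2*m),
      (I x).val = if x.val % 2 = 0 then x.val + 1 else x.val - 1 := by
    intro x
    have hlt := x.isLt
    show (if x.val % 2 = 0 then min (x.val + 1) (2*n+2*m - 1) else x.val - 1) = _
    split_ifs with h <;> omega
  have hIfpf : ∀ x, I x ≠ x := by
    intro x h
    have h2 := hIval x
    rw [h] at h2
    have := x.isLt
    split_ifs at h2 <;> omega
  have hII : ∀ x, I (I x) = x := by
    intro x
    apply Fin.ext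
    have h1 := hIval x
    have h2 := hIval (I x)
    have := x.isLt
    split_ifs at h1 h2 <;> omega
  have hI2 : I * I = 1 := Equiv.ext fun x => by
    simp only [Equiv.Perm.mul_apply, hII x, Equiv.Perm.one_apply]
  have hIinv : I⁻¹ = I := inv_eq_of_mul_eq_one_right hI2
  -- basic facts about π
  have hππ : ∀ x, π (π x) = x := fun x => (hpair x).1
  have hπfpf : ∀ x, π x ≠ x := fun x => (hpair x).2
  have hπ2 : π * π = 1 := Equiv.ext fun x => by
    simp only [Equiv.Perm.mul_apply, hππ x, Equiv.Perm.one_apply]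
  have hπinv : π⁻¹ = π := inv_eq_of_mul_eq_one_right hπ2
  -- γ on even indices
  have hγeven : ∀ x : Fin (2*n+2*m), x.val % 2 = 0 → γ x = I x := by
    intro x hx
    rw [hγdef, gamma_apply_even (2*n) (2*m) (by omega) (by omega) x hx]
    apply Fin.ext
    rw [hIval x, if_pos hx]
  -- τ algebra
  have hτapp : ∀ x, τ x = I (π x) := fun x => rfl
  have hπIτ : π = I * τ := by
    rw [hτdef, ← mul_assoc, hI2, one_mul]
  have hτinv : τ⁻¹ = π * I := by
    rw [hτdef, mul_inv_rev, hIinv, hπinv]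
  have hconj1 : I * τ * I = τ⁻¹ := by
    refine Equiv.ext fun x => ?_
    simp only [Equiv.Perm.mul_apply, hτinv, hτapp, hII]
  have hconj : ∀ k : ℤ, I * τ^k * I = τ^(-k) := by
    intro k
    have h2 : (MulAut.conj I) (τ^k) = ((MulAut.conj I) τ)^k := map_zpow _ _ _
    rw [MulAut.conj_apply, MulAut.conj_apply, hIinv] at h2
    rw [h2, hconj1, inv_zpow, ← zpow_neg]
  have hIτpt : ∀ (k : ℤ) (x : Fin (2*n+2*m)), I ((τ^k) x) = (τ^(-k)) (I x) := by
    intro k x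
    have h := congrFun (congrArg (fun (g : Equiv.Perm (Fin (2*n+2*m))) => ⇑g) (hconj k)) (I x)
    simp only [Equiv.Perm.mul_apply, hII] at h
    exact h
  have hSCconj : ∀ a b, τ.SameCycle a b → τ.SameCycle (I a) (I b) := by
    rintro a b ⟨k, rfl⟩
    exact ⟨-k, (hIτpt k a).symm⟩
  -- the connectivity relation
  set R : Fin (2*n+2*m) → Fin (2*n+2*m) → Prop :=
    fun x y => τ.SameCycle x y ∨ τ.SameCycle (I x) y with hRdef
  have hRrefl : ∀ x, R x x := fun x => Or.inl (Equiv.Perm.SameCycle.refl _ _)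
  have hRsymm : ∀ x y, R x y → R y x := by
    rintro x y (h | h)
    · exact Or.inl h.symm
    · refine Or.inr ?_
      have := hSCconj _ _ h.symm
      rwa [hII] at this
  have hRtrans : ∀ x y z, R x y → R y z → R x z := by
    rintro x y z (h1 | h1) (h2 | h2)
    · exact Or.inl (h1.trans h2)
    · exact Or.inr ((hSCconj _ _ h1).trans h2)
    · exact Or.inr (h1.trans h2)
    · refine Or.inl (Equiv.Perm.SameCycle.trans ?_ h2)
      have := hSCconj _ _ h1
      rwa [hII] at this
  have hRI : ∀ x, R x (I x) := fun x => Or.inr (Equiv.Perm.SameCycle.refl _ _)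
  have hRπ : ∀ x, R x (π x) := by
    intro x
    refine Or.inr ⟨-1, ?_⟩
    rw [zpow_neg_one, hτinv]
    simp only [Equiv.Perm.mul_apply, hII]
  have hσapp : ∀ x, σ x = π (γ x) := by
    intro x
    rw [hσdef]
    simp only [Equiv.Perm.mul_apply, hπinv]
  have hRσ_even : ∀ x : Fin (2*n+2*m), x.val % 2 = 0 → R x (σ x) := by
    intro x hx
    have h1 : σ x = π (I x) := by rw [hσapp, hγeven x hx]
    rw [h1]
    exact hRtrans _ _ _ (hRI x) (hRπ (I x))
  have hRσ : ∀ x, R x (σ x) := by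
    intro x
    by_cases hx : x.val % 2 = 0
    · exact hRσ_even x hx
    · have hxodd : (x.val + 1) % 2 = 0 := by omega
      have key : ∀ j : ℕ, 1 ≤ j → R (σ x) ((σ^j) x) := by
        intro j
        induction j with
        | zero => intro h; omega
        | succ j ih =>
          intro _
          rcases Nat.eq_zero_or_pos j with h0 | hpos
          · subst h0
            simpa using hRrefl (σ x)
          · have hprev := ih hpos
            have hstep_eq : ((σ^(j+1)) : Equiv.Perm (Fin (2*n+2*m))) x = σ ((σ^j) x) := by
              rw [pow_succ']
              rfl
            by_cases he : (σ^j) x = x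
            · rw [hstep_eq, he]
              exact hRrefl (σ x)
            · have hsc : σ.SameCycle x ((σ^j) x) := ⟨(j : ℤ), by rw [zpow_natCast]⟩
              have heven : ((σ^j) x).val % 2 = 0 := by
                by_contra hodd
                exact he (hsep x _ hsc hxodd (by omega)).symm
              have hstep := hRσ_even _ heven
              rw [hstep_eq]
              exact hRtrans _ _ _ hprev hstep
      have hord1 : 1 ≤ orderOf σ := orderOf_pos σ
      have hord : (σ^(orderOf σ)) x = x := by
        rw [pow_orderOf_eq_one]
        rfl
      have h := key _ hord1
      rw [hord] at h
      exact hRsymm _ _ h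
  have hRγ : ∀ x, R x (γ x) := by
    intro x
    have h1 : γ x = π (σ x) := by rw [hσapp, hππ]
    rw [h1]
    exact hRtrans _ _ _ (hRσ x) (hRπ _)
  -- transitivity
  have hRall : ∀ x y, R x y := by
    intro x y
    obtain ⟨g, hg, hgx⟩ := htrans x y
    rw [← hgx]
    refine Subgroup.closure_induction
      (p := fun g _ => ∀ z, R z (g z)) ?_ ?_ ?_ ?_ hg x
    · rintro g (rfl | rfl)
      · exact hRπ
      · exact hRγ
    · intro z
      simpa using hRrefl z
    · intro a b _ _ ha hb z
      have h1 := hb z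
      have h2 := ha (b z)
      exact hRtrans _ _ _ h1 (by simpa using h2)
    · intro a _ ha z
      have h1 := ha (a⁻¹ z)
      rw [show a (a⁻¹ z) = z from a.apply_symm_apply z] at h1
      exact hRsymm _ _ h1
  -- x and I x are never on the same τ-cycle
  have hnotIC : ∀ x, ¬ τ.SameCycle x (I x) := by
    rintro x ⟨k, hk⟩
    have hgen : ∀ j : ℤ, I ((τ^j) x) = (τ^(k-j)) x := by
      intro j
      rw [hIτpt j x, ← hk, ← Equiv.Perm.mul_apply, ← zpow_add, neg_add_eq_sub]
    rcases Int.even_or_odd k with ⟨j, hj⟩ | ⟨j, hj⟩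
    · have h := hgen j
      have hexp : k - j = j := by omega
      rw [hexp] at h
      exact hIfpf _ h
    · have h1 : π ((τ^j) x) = I ((τ^(j+1)) x) := by
        have e1 : (τ^(j+1) : Equiv.Perm (Fin (2*n+2*m))) = τ * τ^j := by
          rw [show (j+1 : ℤ) = 1 + j from by ring, zpow_one_add]
        rw [hπIτ, e1]
        simp only [Equiv.Perm.mul_apply]
      rw [hgen (j+1)] at h1
      have hexp : k - (j+1) = j := by omega
      rw [hexp] at h1
      exact hπfpf _ h1
  -- the two cycles
  have hNpos : 0 < 2*n+2*m := by omega
  set x₀ : Fin (2*n+2*m) := ⟨0, hNpos⟩ with hx₀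
  set C : Fin (2*n+2*m) → Set (Fin (2*n+2*m)) :=
    fun x => {y | τ.SameCycle x y} with hCdef
  have hCeq : ∀ x y, τ.SameCycle x y → C x = C y := by
    intro x y h
    ext z
    simp only [hCdef, Set.mem_setOf_eq]
    exact ⟨fun hz => h.symm.trans hz, fun hz => h.trans hz⟩
  have hcover : ∀ y, y ∈ C x₀ ∨ y ∈ C (I x₀) := fun y => hRall x₀ y
  have hdisj : Disjoint (C x₀) (C (I x₀)) := by
    rw [Set.disjoint_left]
    intro a h1 h2
    exact hnotIC x₀ (h1.trans h2.symm)
  have hmemC : ∀ x, x ∈ C x := fun x => Equiv.Perm.SameCycle.refl _ _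
  have hne2 : C x₀ ≠ C (I x₀) := by
    intro h
    have := hmemC x₀
    rw [h] at this
    exact hnotIC x₀ this.symm
  have himg : ∀ x, I '' (C x) = C (I x) := by
    intro x
    ext z
    constructor
    · rintro ⟨w, ⟨k, rfl⟩, rfl⟩
      exact ⟨-k, (hIτpt k x).symm⟩
    · rintro ⟨k, rfl⟩
      refine ⟨(τ^(-k)) x, ⟨-k, rfl⟩, ?_⟩
      rw [hIτpt (-k) x, neg_neg]
  have hcard_eq : (C x₀).ncard = (C (I x₀)).ncard := by
    rw [← himg, Set.ncard_image_of_injective _ I.injective]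
  have huniv : C x₀ ∪ C (I x₀) = Set.univ := by
    ext z
    simpa using hcover z
  have hsum : (C x₀).ncard + (C (I x₀)).ncard = 2*n + 2*m := by
    rw [← Set.ncard_union_eq hdisj (Set.toFinite _) (Set.toFinite _), huniv,
      Set.ncard_univ, Nat.card_eq_fintype_card, Fintype.card_fin]
  have hsize : (C x₀).ncard = n + m := by omega
  have hsize' : (C (I x₀)).ncard = n + m := by omega
  have hCx : ∀ x, C x = C x₀ ∨ C x = C (I x₀) := by
    intro x
    rcases hcover x with h | h
    · exact Or.inl (hCeq _ _ h).symm
    · exact Or.inr (hCeq _ _ h).symm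
  -- |A| = n + m and Even |A|
  have hπA : ∀ x ∈ A, π x ∈ A := by
    intro x hx
    rw [← hA_img]
    exact Set.mem_image_of_mem _ hx
  have hEvenA : Even A.ncard :=
    aux_even_ncard π hππ hπfpf A.ncard A (Set.toFinite _) hπA rfl
  have hAcard : A.ncard = n + m := by
    set f : Fin (n+m) → Fin (2*n+2*m) := fun i =>
      if (⟨2*i.val, by omega⟩ : Fin (2*n+2*m)) ∈ A then ⟨2*i.val, by omega⟩
      else ⟨2*i.val+1, by omega⟩ with hfdef
    have hXor : ∀ i : Fin (n+m),
        Xor' ((⟨2*i.val, by omega⟩ : Fin (2*n+2*m)) ∈ A)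
          ((⟨2*i.val+1, by omega⟩ : Fin (2*n+2*m)) ∈ A) := fun i => hA_xor i.val (by omega)
    have hfA : ∀ i, f i ∈ A := by
      intro i
      rw [hfdef]
      dsimp only
      split_ifs with h
      · exact h
      · rcases hXor i with ⟨h1, h2⟩ | ⟨h1, h2⟩
        · exact absurd h1 h
        · exact h1
    have hfinj : Function.Injective f := by
      intro i j h
      rw [hfdef] at h
      dsimp only at h
      apply Fin.ext
      split_ifs at h <;>
        · have := congrArg Fin.val h
          simp only [] at this
          omega
    have hfsurj : ∀ a ∈ A, ∃ i, f i = a := by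
      intro a ha
      have halt := a.isLt
      refine ⟨⟨a.val/2, by omega⟩, ?_⟩
      rcases (by omega : a.val = 2*(a.val/2) ∨ a.val = 2*(a.val/2)+1) with h2 | h2
      · have he : (⟨2*(a.val/2), by omega⟩ : Fin (2*n+2*m)) = a := Fin.ext h2.symm
        rw [hfdef]
        dsimp only
        rw [if_pos]
        · exact he
        · rw [he]; exact ha
      · have he : (⟨2*(a.val/2)+1, by omega⟩ : Fin (2*n+2*m)) = a := Fin.ext h2.symm
        rw [hfdef]
        dsimp only
        rw [if_neg]
        · exact he
        · rcases hA_xor (a.val/2) (by omega) with ⟨h1, h2⟩ | ⟨h1, h2⟩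
          · exact absurd (show _ ∈ A by rw [he]; exact ha) h2
          · exact h2
    have hAeq : A = Set.range f := by
      ext a
      constructor
      · intro ha
        obtain ⟨i, hi⟩ := hfsurj a ha
        exact ⟨i, hi⟩
      · rintro ⟨i, rfl⟩
        exact hfA i
    rw [hAeq, ← Set.image_univ, Set.ncard_image_of_injective _ hfinj,
      Set.ncard_univ, Nat.card_eq_fintype_card, Fintype.card_fin]
  have hEvenNM : Even (n + m) := hAcard ▸ hEvenA
  refine ⟨?_, ?_, hEvenNM⟩
  · show Set.ncard {O : Set (Fin (2*n+2*m)) | ∃ x, O = {y | τ.SameCycle x y}} = 2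
    have hset : {O : Set (Fin (2*n+2*m)) | ∃ x, O = {y | τ.SameCycle x y}}
        = {C x₀, C (I x₀)} := by
      ext O
      simp only [Set.mem_setOf_eq, Set.mem_insert_iff, Set.mem_singleton_iff]
      constructor
      · rintro ⟨x, rfl⟩
        exact hCx x
      · rintro (rfl | rfl)
        · exact ⟨x₀, rfl⟩
        · exact ⟨I x₀, rfl⟩
    rw [hset, Set.ncard_pair hne2]
  · intro x
    show (C x).ncard = n + m
    rcases hCx x with h | h <;> rw [h]
    · exact hsize
    · exact hsize'
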